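/- Equivalence of the rank-constrained FA problem with its trace reformulation: For a PSD p×p matrix Σ, 0 ≤ r < p and q ≥ 1, the minimum of ‖Σ − Θ − Φ‖_q^q over PSD Θ with rank(Θ) ≤ r and diagonal Φ ⪰ 0 with Σ − Φ ⪰ 0, equals the minimum of Tr(W (Σ − Φ)^q) over diagonal Φ ⪰ 0 with Σ − Φ ⪰ 0 and symmetric W with 0 ⪯ W ⪯ I and Tr(W) = p − r. -/

import Mathlib

open Matrix

/-- The `q`-th power of a real symmetric PSD matrix, via its eigendecomposition. -/
noncomputable def matrixRpow {p : ℕ} {A : Matrix (Fin p) (Fin p) ℝ}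
    (hA : A.IsHermitian) (q : ℝ) : Matrix (Fin p) (Fin p) ℝ :=
  (hA.eigenvectorUnitary : Matrix (Fin p) (Fin p) ℝ) *
    Matrix.diagonal (fun i => hA.eigenvalues i ^ q) *
    star (hA.eigenvectorUnitary : Matrix (Fin p) (Fin p) ℝ)

section FAaux
open Finset Polynomial
set_option linter.unusedSectionVars false

variable {p : ℕ}

section conj
variable {U : Matrix (Fin p) (Fin p) ℝ}

lemma UDU_mul (hU : U ∈ Matrix.unitaryGroup (Fin p) ℝ) (d e : Fin p → ℝ) :
    (U * diagonal d * star U) * (U * diagonal e * star U)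
      = U * diagonal (fun i => d i * e i) * star U := by
  have h1 : star U * U = 1 := hU.1
  calc (U * diagonal d * star U) * (U * diagonal e * star U)
      = U * (diagonal d * (star U * U) * diagonal e) * star U := by
        noncomm_ring
    _ = U * diagonal (fun i => d i * e i) * star U := by
        rw [h1, mul_one, diagonal_mul_diagonal]

lemma trace_UDU (hU : U ∈ Matrix.unitaryGroup (Fin p) ℝ) (d : Fin p → ℝ) :
    (U * diagonal d * star U).trace = ∑ i, d i := by
  rw [trace_mul_cycle, hU.1, one_mul, trace_diagonal]

lemma trace_mul_UDU (W : Matrix (Fin p) (Fin p) ℝ) (d : Fin p → ℝ) :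
    (W * (U * diagonal d * star U)).trace = ∑ i, (star U * W * U) i i * d i := by
  have h1 : (W * (U * diagonal d * star U)).trace
      = ((star U * W * U) * diagonal d).trace := by
    rw [trace_mul_comm]
    rw [show (U * diagonal d * star U) * W = (U * diagonal d) * (star U * W) by noncomm_ring]
    rw [trace_mul_comm]
    congr 1
    noncomm_ring
  rw [h1]
  simp [trace, Matrix.diag, mul_diagonal]

lemma conj_entry_eq (W : Matrix (Fin p) (Fin p) ℝ) (i : Fin p) :
    (star U * W * U) i i = (fun j => U j i) ⬝ᵥ W *ᵥ (fun j => U j i) := by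
  simp only [Matrix.mul_apply, star_apply, star_trivial, dotProduct, mulVec, Finset.sum_mul,
    Finset.mul_sum]
  rw [Finset.sum_comm]
  exact Finset.sum_congr rfl fun x _ => Finset.sum_congr rfl fun y _ => by ring

lemma col_dot_one (hU : U ∈ Matrix.unitaryGroup (Fin p) ℝ) (i : Fin p) :
    (fun j => U j i) ⬝ᵥ (fun j => U j i) = 1 := by
  have h1 : star U * U = 1 := hU.1
  have := congrFun (congrFun h1 i) i
  simpa [Matrix.mul_apply, dotProduct, star_apply, one_apply] using this

lemma conj_entry_nonneg {W : Matrix (Fin p) (Fin p) ℝ} (hW : W.PosSemidef) (i : Fin p) :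
    0 ≤ (star U * W * U) i i := by
  rw [conj_entry_eq]
  simpa using hW.dotProduct_mulVec_nonneg (fun j => U j i)

lemma conj_entry_le_one (hU : U ∈ Matrix.unitaryGroup (Fin p) ℝ)
    {W : Matrix (Fin p) (Fin p) ℝ} (hW : (1 - W).PosSemidef) (i : Fin p) :
    (star U * W * U) i i ≤ 1 := by
  have h := hW.dotProduct_mulVec_nonneg (fun j => U j i)
  rw [conj_entry_eq]
  simp only [star_trivial, sub_mulVec, dotProduct_sub, one_mulVec] at h ⊢
  rw [col_dot_one hU i] at h
  linarith

lemma trace_conj (hU : U ∈ Matrix.unitaryGroup (Fin p) ℝ) (W : Matrix (Fin p) (Fin p) ℝ) :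
    (star U * W * U).trace = W.trace := by
  rw [trace_mul_cycle, hU.2, one_mul]

end conj

lemma card_filter_lt {p : ℕ} (k : ℕ) (hk : k ≤ p) :
    (Finset.univ.filter (fun i : Fin p => (i:ℕ) < k)).card = k := by
  have : (Finset.univ.filter (fun i : Fin p => (i:ℕ) < k))
      = (Finset.univ : Finset (Fin k)).map ⟨Fin.castLE hk, Fin.castLE_injective hk⟩ := by
    ext j
    simp only [Finset.mem_filter, Finset.mem_univ, true_and, Finset.mem_map,
      Function.Embedding.coeFn_mk, Fin.ext_iff]
    constructor
    · intro h; exact ⟨⟨j, h⟩, rfl⟩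
    · rintro ⟨i, hi⟩; rw [← hi]; exact i.2
  rw [this, Finset.card_map, Finset.card_univ, Fintype.card_fin]

lemma fan_scalar {p k : ℕ} (hk : k ≤ p) (d t : Fin p → ℝ) (hd : Monotone d)
    (ht0 : ∀ i, 0 ≤ t i) (ht1 : ∀ i, t i ≤ 1) (hsum : ∑ i, t i = k) :
    ∑ i ∈ Finset.univ.filter (fun i : Fin p => (i:ℕ) < k), d i ≤ ∑ i, t i * d i := by
  rcases Nat.eq_zero_or_pos k with hk0 | hk0
  · subst hk0
    have ht : ∀ i ∈ Finset.univ, t i = 0 := by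
      intro i _
      have := (Finset.sum_eq_zero_iff_of_nonneg (fun i _ => ht0 i)).1 (by simpa using hsum)
      exact this i (Finset.mem_univ i)
    simp only [Nat.not_lt_zero, Finset.filter_false, Finset.sum_empty]
    rw [Finset.sum_congr rfl (fun i hi => by rw [ht i hi, zero_mul])]
    simp
  · have hkp : k - 1 < p := lt_of_lt_of_le (Nat.sub_lt hk0 one_pos) hk
    set τ := d ⟨k - 1, hkp⟩ with hτ
    have hsumB : ∑ i : Fin p, (if (i:ℕ) < k then (1:ℝ) else 0) = k := by
      rw [← Finset.sum_filter]
      simp [card_filter_lt k hk]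
    have key : ∀ i : Fin p,
        (if (i:ℕ) < k then d i else 0) + τ * (t i - if (i:ℕ) < k then 1 else 0) ≤ t i * d i := by
      intro i
      by_cases h : (i:ℕ) < k
      · have hdi : d i ≤ τ := hd (by simp [Fin.le_def]; omega)
        have h1 : t i - 1 ≤ 0 := by linarith [ht1 i]
        simp only [if_pos h]
        nlinarith
      · have hdi : τ ≤ d i := hd (by simp [Fin.le_def]; omega)
        simp only [if_neg h]
        nlinarith [ht0 i]
    calc ∑ i ∈ Finset.univ.filter (fun i : Fin p => (i:ℕ) < k), d i
        = ∑ i : Fin p, ((if (i:ℕ) < k then d i else 0) + τ * (t i - if (i:ℕ) < k then 1 else 0)) := by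
          rw [Finset.sum_add_distrib, Finset.sum_filter]
          have : ∑ i : Fin p, τ * (t i - if (i:ℕ) < k then 1 else 0)
              = τ * ((∑ i : Fin p, t i) - ∑ i : Fin p, (if (i:ℕ) < k then (1:ℝ) else 0)) := by
            rw [← Finset.mul_sum, Finset.sum_sub_distrib]
          rw [this, hsum, hsumB, sub_self, mul_zero, add_zero]
      _ ≤ ∑ i, t i * d i := Finset.sum_le_sum fun i _ => key i

variable {p : ℕ} {U : Matrix (Fin p) (Fin p) ℝ}

lemma charpoly_unitary_conj (hU : U ∈ Matrix.unitaryGroup (Fin p) ℝ)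
    (A : Matrix (Fin p) (Fin p) ℝ) :
    (U * A * star U).charpoly = A.charpoly := by
  classical
  set U' : Matrix (Fin p) (Fin p) ℝ[X] := (C : ℝ →+* ℝ[X]).mapMatrix U with hU'
  set sU' : Matrix (Fin p) (Fin p) ℝ[X] := (C : ℝ →+* ℝ[X]).mapMatrix (star U) with hsU'
  have hone : U' * sU' = 1 := by
    rw [hU', hsU', ← _root_.map_mul (C.mapMatrix : Matrix (Fin p) (Fin p) ℝ →+* _), hU.2,
      _root_.map_one]
  have key : charmatrix (U * A * star U) = U' * charmatrix A * sU' := by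
    unfold charmatrix
    rw [Matrix.mul_sub, Matrix.sub_mul]
    congr 1
    · have hc : U' * Matrix.scalar (Fin p) (X : ℝ[X]) = Matrix.scalar (Fin p) X * U' :=
        (Matrix.scalar_commute (X : ℝ[X]) (fun r => Commute.all _ _) U').symm
      rw [hc, Matrix.mul_assoc, hone, Matrix.mul_one]
    · rw [_root_.map_mul (C.mapMatrix : Matrix (Fin p) (Fin p) ℝ →+* _) (U * A) (star U),
        _root_.map_mul (C.mapMatrix : Matrix (Fin p) (Fin p) ℝ →+* _) U A, hU', hsU']
  have hdet : U'.det * sU'.det = 1 := by rw [← det_mul, hone, det_one]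
  rw [Matrix.charpoly, Matrix.charpoly, key, det_mul, det_mul, mul_right_comm, hdet, one_mul]

lemma charmatrix_diagonal (d : Fin p → ℝ) :
    charmatrix (diagonal d) = diagonal (fun i => (X : ℝ[X]) - C (d i)) := by
  ext i j
  by_cases h : i = j
  · subst h; simp [charmatrix_apply_eq, diagonal_apply_eq]
  · rw [charmatrix_apply_ne _ _ _ h, diagonal_apply_ne _ h, diagonal_apply_ne _ h]
    simp

lemma charpoly_UDU (hU : U ∈ Matrix.unitaryGroup (Fin p) ℝ) (d : Fin p → ℝ) :
    (U * diagonal d * star U).charpoly = ∏ i, ((X : ℝ[X]) - C (d i)) := by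
  rw [charpoly_unitary_conj hU, Matrix.charpoly, charmatrix_diagonal, det_diagonal]

lemma eig_multiset (hU : U ∈ Matrix.unitaryGroup (Fin p) ℝ) (d : Fin p → ℝ)
    (hA : (U * diagonal d * star U).IsHermitian) :
    Multiset.map hA.eigenvalues Finset.univ.val = Multiset.map d Finset.univ.val := by
  have h2 : (U * diagonal d * star U).charpoly = ∏ i, ((X : ℝ[X]) - C (hA.eigenvalues i)) := by
    conv_lhs => rw [hA.spectral_theorem]
    have := charpoly_UDU (U := (hA.eigenvectorUnitary : Matrix (Fin p) (Fin p) ℝ))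
      hA.eigenvectorUnitary.2 (RCLike.ofReal ∘ hA.eigenvalues)
    simpa [RCLike.ofReal_real_eq_id] using this
  have h1 := charpoly_UDU hU d
  have hroots : (Multiset.map d Finset.univ.val) = (Multiset.map hA.eigenvalues Finset.univ.val) := by
    have e1 : (Multiset.map (fun a => (X:ℝ[X]) - C a) (Multiset.map d Finset.univ.val)).prod
        = ∏ i, ((X : ℝ[X]) - C (d i)) := by
      rw [Multiset.map_map]; rfl
    have e2 : (Multiset.map (fun a => (X:ℝ[X]) - C a) (Multiset.map hA.eigenvalues Finset.univ.val)).prod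
        = ∏ i, ((X : ℝ[X]) - C (hA.eigenvalues i)) := by
      rw [Multiset.map_map]; rfl
    calc Multiset.map d Finset.univ.val
        = (Multiset.map (fun a => (X:ℝ[X]) - C a) (Multiset.map d Finset.univ.val)).prod.roots := by
          rw [Polynomial.roots_multiset_prod_X_sub_C]
      _ = (Multiset.map (fun a => (X:ℝ[X]) - C a) (Multiset.map hA.eigenvalues Finset.univ.val)).prod.roots := by
          rw [e1, e2, ← h1, ← h2]
      _ = Multiset.map hA.eigenvalues Finset.univ.val := Polynomial.roots_multiset_prod_X_sub_C _
  exact hroots.symm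

lemma sum_f_eig (hU : U ∈ Matrix.unitaryGroup (Fin p) ℝ) (d : Fin p → ℝ)
    (hA : (U * diagonal d * star U).IsHermitian) (f : ℝ → ℝ) :
    ∑ i, f (hA.eigenvalues i) = ∑ i, f (d i) := by
  have h := congrArg (fun m => (Multiset.map f m).sum) (eig_multiset hU d hA)
  simpa [Multiset.map_map, Finset.sum, Function.comp_def] using h

variable {p : ℕ}

lemma card_filter_lt' (k : ℕ) (hk : k ≤ p) :
    (Finset.univ.filter (fun i : Fin p => (i:ℕ) < k)).card = k := by
  have : (Finset.univ.filter (fun i : Fin p => (i:ℕ) < k))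
      = (Finset.univ : Finset (Fin k)).map ⟨Fin.castLE hk, Fin.castLE_injective hk⟩ := by
    ext x
    simp only [Finset.mem_filter, Finset.mem_univ, true_and, Finset.mem_map,
      Function.Embedding.coeFn_mk, Fin.ext_iff]
    constructor
    · intro h; exact ⟨⟨x, h⟩, rfl⟩
    · rintro ⟨i, hi⟩; rw [← hi]; exact i.2
  rw [this, Finset.card_map, Finset.card_univ, Fintype.card_fin]

lemma card_filter_ge (j : ℕ) (hj : j ≤ p) :
    (Finset.univ.filter (fun i : Fin p => j ≤ (i:ℕ))).card = p - j := by
  have h := Finset.card_filter_add_card_filter_not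
    (s := (Finset.univ : Finset (Fin p))) (p := fun i : Fin p => (i:ℕ) < j)
  have h3 : (Finset.univ.filter (fun i : Fin p => ¬ (i:ℕ) < j))
      = (Finset.univ.filter (fun i : Fin p => j ≤ (i:ℕ))) := by
    apply Finset.filter_congr; intro i _; simp [not_lt]
  rw [card_filter_lt' j hj, h3] at h
  simp only [Finset.card_univ, Fintype.card_fin] at h
  omega

section ortho
variable {ι : Type*} [Fintype ι] [DecidableEq ι] {w : ι → (Fin p → ℝ)}

lemma sum_smul_dotProduct (f : ι → ℝ) (v : Fin p → ℝ) :
    (∑ i, f i • w i) ⬝ᵥ v = ∑ i, f i * (w i ⬝ᵥ v) := by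
  simp only [dotProduct, Finset.sum_apply, Pi.smul_apply, smul_eq_mul, Finset.sum_mul,
    Finset.mul_sum]
  rw [Finset.sum_comm]
  exact Finset.sum_congr rfl fun i _ => Finset.sum_congr rfl fun x _ => by ring

omit [DecidableEq ι] in
lemma dotProduct_sum_smul (f : ι → ℝ) (v : Fin p → ℝ) :
    v ⬝ᵥ (∑ i, f i • w i) = ∑ i, f i * (v ⬝ᵥ w i) := by
  simp only [dotProduct, Finset.sum_apply, Pi.smul_apply, smul_eq_mul, Finset.sum_mul,
    Finset.mul_sum]
  rw [Finset.sum_comm]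
  exact Finset.sum_congr rfl fun i _ => Finset.sum_congr rfl fun x _ => by ring

variable (hw : ∀ i j, w i ⬝ᵥ w j = if i = j then 1 else 0)
include hw

lemma ortho_linearIndependent : LinearIndependent ℝ w := by
  rw [Fintype.linearIndependent_iff]
  intro g hg i
  have h := congrArg (fun v => v ⬝ᵥ w i) hg
  simp only [sum_smul_dotProduct, hw, zero_dotProduct, mul_ite, mul_one, mul_zero,
    Finset.sum_ite_eq', Finset.mem_univ, if_pos] at h
  exact h

lemma ortho_dot_sum_sum (f g : ι → ℝ) :
    (∑ i, f i • w i) ⬝ᵥ (∑ j, g j • w j) = ∑ i, f i * g i := by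
  rw [sum_smul_dotProduct]
  refine Finset.sum_congr rfl fun i _ => ?_
  rw [dotProduct_sum_smul]
  simp only [hw, mul_ite, mul_one, mul_zero, Finset.sum_ite_eq', Finset.sum_ite_eq,
    Finset.mem_univ, if_pos]

lemma ortho_quadform {A : Matrix (Fin p) (Fin p) ℝ} {b : ι → ℝ}
    (heig : ∀ i, A *ᵥ w i = b i • w i) (c : ι → ℝ) :
    (∑ i, c i • w i) ⬝ᵥ (A *ᵥ ∑ i, c i • w i) = ∑ i, b i * c i ^ 2 := by
  have hAv : A *ᵥ (∑ i, c i • w i) = ∑ i, (c i * b i) • w i := by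
    rw [← Matrix.mulVecLin_apply, map_sum]
    refine Finset.sum_congr rfl fun i _ => ?_
    rw [LinearMap.map_smul, Matrix.mulVecLin_apply, heig i, smul_smul]
  rw [hAv, ortho_dot_sum_sum hw]
  exact Finset.sum_congr rfl fun i _ => by ring

end ortho

section spanstuff

lemma eigbasis_dot {A : Matrix (Fin p) (Fin p) ℝ} (hA : A.IsHermitian) (i j : Fin p) :
    (⇑(hA.eigenvectorBasis i) : Fin p → ℝ) ⬝ᵥ ⇑(hA.eigenvectorBasis j)
      = if i = j then 1 else 0 := by
  have h := hA.eigenvectorBasis.orthonormal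
  rw [orthonormal_iff_ite] at h
  have h2 := h i j
  rw [EuclideanSpace.inner_eq_star_dotProduct] at h2
  rw [dotProduct_comm]
  simpa using h2

/-- span of the eigenvectors indexed by `T` -/
noncomputable def eigSpan {A : Matrix (Fin p) (Fin p) ℝ} (hA : A.IsHermitian)
    (T : Finset (Fin p)) : Submodule ℝ (Fin p → ℝ) :=
  Submodule.span ℝ (Set.range (fun i : {i // i ∈ T} => (⇑(hA.eigenvectorBasis i) : Fin p → ℝ)))

lemma eigSpan_finrank {A : Matrix (Fin p) (Fin p) ℝ} (hA : A.IsHermitian) (T : Finset (Fin p)) :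
    Module.finrank ℝ (eigSpan hA T) = T.card := by
  have hli : LinearIndependent ℝ (fun i : {i // i ∈ T} => (⇑(hA.eigenvectorBasis i) : Fin p → ℝ)) := by
    have h := ortho_linearIndependent (w := fun i : Fin p => (⇑(hA.eigenvectorBasis i) : Fin p → ℝ))
      (eigbasis_dot hA)
    exact h.comp Subtype.val Subtype.val_injective
  rw [eigSpan, finrank_span_eq_card hli, Fintype.card_coe]

lemma eigSpan_quad_bounds {A : Matrix (Fin p) (Fin p) ℝ} (hA : A.IsHermitian)
    (T : Finset (Fin p)) {x : Fin p → ℝ} (hx : x ∈ eigSpan hA T) :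
    (∀ m : ℝ, (∀ i ∈ T, m ≤ hA.eigenvalues i) → m * (x ⬝ᵥ x) ≤ x ⬝ᵥ (A *ᵥ x)) ∧
    (∀ M : ℝ, (∀ i ∈ T, hA.eigenvalues i ≤ M) → x ⬝ᵥ (A *ᵥ x) ≤ M * (x ⬝ᵥ x)) := by
  classical
  rw [eigSpan, Submodule.mem_span_range_iff_exists_fun] at hx
  obtain ⟨c, hc⟩ := hx
  have hworth : ∀ i j : {i // i ∈ T},
      ((⇑(hA.eigenvectorBasis i) : Fin p → ℝ)) ⬝ᵥ (⇑(hA.eigenvectorBasis j) : Fin p → ℝ)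
        = if i = j then 1 else 0 := by
    intro i j
    rw [eigbasis_dot hA i j]
    by_cases h : i = j
    · subst h; simp
    · rw [if_neg h, if_neg (fun h' => h (Subtype.ext h'))]
  have heig : ∀ i : {i // i ∈ T},
      A *ᵥ (⇑(hA.eigenvectorBasis i) : Fin p → ℝ) = hA.eigenvalues i • _ :=
    fun i => hA.mulVec_eigenvectorBasis i
  have hq := ortho_quadform hworth heig c
  have hd := ortho_dot_sum_sum hworth c c
  rw [hc] at hq hd
  constructor
  · intro m hm
    rw [hq, hd]
    have : ∀ i : {i // i ∈ T}, m * (c i * c i) ≤ hA.eigenvalues i * c i ^ 2 := by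
      intro i
      have := hm i i.2
      nlinarith [sq_nonneg (c i)]
    calc m * ∑ i, c i * c i = ∑ i : {i // i ∈ T}, m * (c i * c i) := by rw [Finset.mul_sum]
      _ ≤ ∑ i : {i // i ∈ T}, hA.eigenvalues i * c i ^ 2 := Finset.sum_le_sum fun i _ => this i
  · intro M hM
    rw [hq, hd]
    have : ∀ i : {i // i ∈ T}, hA.eigenvalues i * c i ^ 2 ≤ M * (c i * c i) := by
      intro i
      have := hM i i.2
      nlinarith [sq_nonneg (c i)]
    calc ∑ i : {i // i ∈ T}, hA.eigenvalues i * c i ^ 2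
        ≤ ∑ i : {i // i ∈ T}, M * (c i * c i) := Finset.sum_le_sum fun i _ => this i
      _ = M * ∑ i, c i * c i := by rw [Finset.mul_sum]

lemma dotProduct_self_pos {x : Fin p → ℝ} (hx : x ≠ 0) : 0 < x ⬝ᵥ x := by
  have h1 : 0 ≤ x ⬝ᵥ x := Finset.sum_nonneg fun i _ => mul_self_nonneg (x i)
  rcases h1.lt_or_eq with h | h
  · exact h
  · exfalso
    apply hx
    funext i
    by_contra hne
    have : 0 < x ⬝ᵥ x := by
      have : 0 < x i * x i := mul_self_pos.mpr hne
      calc (0:ℝ) < x i * x i := this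
        _ ≤ ∑ j, x j * x j := Finset.single_le_sum (fun j _ => mul_self_nonneg (x j))
            (Finset.mem_univ i)
    linarith [h]

end spanstuff

section weyl

lemma finrank_pi_p : Module.finrank ℝ (Fin p → ℝ) = p := by
  simp [Module.finrank_pi]

lemma finrank_inf_ge (V W : Submodule ℝ (Fin p → ℝ)) :
    Module.finrank ℝ V + Module.finrank ℝ W - p ≤ Module.finrank ℝ (V ⊓ W : Submodule ℝ _) := by
  have h := Submodule.finrank_sup_add_finrank_inf_eq V W
  have h2 : Module.finrank ℝ (V ⊔ W : Submodule ℝ _) ≤ p := by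
    have h3 := Submodule.finrank_le (V ⊔ W)
    rwa [finrank_pi_p] at h3
  omega

lemma exists_ne_zero_mem_of_finrank_pos {V : Submodule ℝ (Fin p → ℝ)}
    (h : 0 < Module.finrank ℝ V) : ∃ x ∈ V, x ≠ 0 := by
  by_contra hc
  push_neg at hc
  have hbot : V = ⊥ := by
    rw [Submodule.eq_bot_iff]
    exact hc
  rw [hbot, finrank_bot] at h
  omega

lemma weyl_ineq {S Θ : Matrix (Fin p) (Fin p) ℝ} (hS : S.IsHermitian) {r : ℕ}
    (hrank : Θ.rank ≤ r) (hM : (S - Θ).IsHermitian)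
    (σ τ : Equiv.Perm (Fin p)) (hσ : Monotone (hS.eigenvalues ∘ σ))
    (hτ : Monotone (hM.eigenvalues ∘ τ)) (j jr : Fin p) (hjr : (jr:ℕ) = (j:ℕ) + r) :
    hS.eigenvalues (σ j) ≤ hM.eigenvalues (τ jr) := by
  classical
  set T1 : Finset (Fin p) := (Finset.univ.filter (fun i : Fin p => (j:ℕ) ≤ (i:ℕ))).image σ with hT1
  set T3 : Finset (Fin p) := (Finset.univ.filter (fun i : Fin p => (i:ℕ) < (jr:ℕ)+1)).image τ with hT3
  have hV1 : Module.finrank ℝ (eigSpan hS T1) = p - (j:ℕ) := by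
    rw [eigSpan_finrank, hT1, Finset.card_image_of_injective _ σ.injective,
      card_filter_ge _ j.2.le]
  have hV3 : Module.finrank ℝ (eigSpan hM T3) = (jr:ℕ) + 1 := by
    rw [eigSpan_finrank, hT3, Finset.card_image_of_injective _ τ.injective,
      card_filter_lt' _ jr.2]
  have hV2 : p - r ≤ Module.finrank ℝ (LinearMap.ker Θ.mulVecLin) := by
    have h := LinearMap.finrank_range_add_finrank_ker Θ.mulVecLin
    rw [finrank_pi_p] at h
    have h2 : Module.finrank ℝ (LinearMap.range Θ.mulVecLin) = Θ.rank := rfl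
    omega
  have hdim : 0 < Module.finrank ℝ
      ((eigSpan hS T1 ⊓ (LinearMap.ker Θ.mulVecLin ⊓ eigSpan hM T3) : Submodule ℝ (Fin p → ℝ))) := by
    have h1 := finrank_inf_ge (LinearMap.ker Θ.mulVecLin) (eigSpan hM T3)
    have h2 := finrank_inf_ge (eigSpan hS T1) (LinearMap.ker Θ.mulVecLin ⊓ eigSpan hM T3)
    have hjp : (j:ℕ) < p := j.2
    have hjrp : (jr:ℕ) < p := jr.2
    omega
  obtain ⟨x, hx, hx0⟩ := exists_ne_zero_mem_of_finrank_pos hdim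
  obtain ⟨hx1, hx2, hx3⟩ : x ∈ eigSpan hS T1 ∧ x ∈ LinearMap.ker Θ.mulVecLin ∧ x ∈ eigSpan hM T3 := by
    exact ⟨hx.1, hx.2.1, hx.2.2⟩
  have hlb := (eigSpan_quad_bounds hS T1 hx1).1 (hS.eigenvalues (σ j)) (by
    intro i hi
    rw [hT1, Finset.mem_image] at hi
    obtain ⟨l, hl, rfl⟩ := hi
    rw [Finset.mem_filter] at hl
    exact hσ (show j ≤ l from hl.2))
  have hub := (eigSpan_quad_bounds hM T3 hx3).2 (hM.eigenvalues (τ jr)) (by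
    intro i hi
    rw [hT3, Finset.mem_image] at hi
    obtain ⟨l, hl, rfl⟩ := hi
    rw [Finset.mem_filter] at hl
    exact hτ (show l ≤ jr by omega))
  have hker : Θ *ᵥ x = 0 := hx2
  have hmid : x ⬝ᵥ ((S - Θ) *ᵥ x) = x ⬝ᵥ (S *ᵥ x) := by
    rw [Matrix.sub_mulVec, dotProduct_sub, hker, dotProduct_zero, sub_zero]
  have hpos := dotProduct_self_pos hx0
  have : hS.eigenvalues (σ j) * (x ⬝ᵥ x) ≤ hM.eigenvalues (τ jr) * (x ⬝ᵥ x) := by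
    calc hS.eigenvalues (σ j) * (x ⬝ᵥ x) ≤ x ⬝ᵥ (S *ᵥ x) := hlb
      _ = x ⬝ᵥ ((S - Θ) *ᵥ x) := hmid.symm
      _ ≤ hM.eigenvalues (τ jr) * (x ⬝ᵥ x) := hub
  exact le_of_mul_le_mul_right this hpos

end weyl

section perPhi
variable {p r : ℕ} {S : Matrix (Fin p) (Fin p) ℝ}

/-- the target quantity: sum of `q`-th powers of the `p-r` smallest eigenvalues -/
noncomputable def mVal (r : ℕ) (q : ℝ) (hS : S.IsHermitian) : ℝ :=
  ∑ i ∈ Finset.univ.filter (fun i : Fin p => (i:ℕ) < p - r),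
    (hS.eigenvalues (Tuple.sort hS.eigenvalues i)) ^ q

lemma real_spectral (hS : S.IsHermitian) :
    S = (hS.eigenvectorUnitary : Matrix (Fin p) (Fin p) ℝ) * diagonal hS.eigenvalues *
      star (hS.eigenvectorUnitary : Matrix (Fin p) (Fin p) ℝ) := by
  have h : (RCLike.ofReal ∘ hS.eigenvalues : Fin p → ℝ) = hS.eigenvalues := by
    funext i; simp [RCLike.ofReal_real_eq_id]
  conv_lhs => rw [hS.spectral_theorem]
  rw [h]
  rfl

lemma mVal_nonneg (q : ℝ) (hS : S.PosSemidef) : 0 ≤ mVal r q hS.1 :=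
  Finset.sum_nonneg fun i _ => Real.rpow_nonneg (hS.eigenvalues_nonneg _) q

lemma fan_bound (q : ℝ) (hq : 1 ≤ q) (hS : S.PosSemidef)
    {W : Matrix (Fin p) (Fin p) ℝ} (hW : W.PosSemidef) (hW1 : (1 - W).PosSemidef)
    (hWt : W.trace = ((p - r : ℕ) : ℝ)) :
    mVal r q hS.1 ≤ (W * ((hS.1.eigenvectorUnitary : Matrix (Fin p) (Fin p) ℝ) *
      Matrix.diagonal (fun i => hS.1.eigenvalues i ^ q) *
      star (hS.1.eigenvectorUnitary : Matrix (Fin p) (Fin p) ℝ))).trace := by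
  set U : Matrix (Fin p) (Fin p) ℝ := (hS.1.eigenvectorUnitary : Matrix (Fin p) (Fin p) ℝ)
  have hU : U ∈ Matrix.unitaryGroup (Fin p) ℝ := hS.1.eigenvectorUnitary.2
  set lam := hS.1.eigenvalues
  set σ := Tuple.sort lam
  set t : Fin p → ℝ := fun i => (star U * W * U) i i with ht
  rw [trace_mul_UDU]
  have hmono : Monotone (fun i => lam (σ i) ^ q) := by
    intro a b hab
    exact Real.rpow_le_rpow (hS.eigenvalues_nonneg _) (Tuple.monotone_sort lam hab)
      (le_trans zero_le_one hq)
  have hsum : ∑ i, t (σ i) = ((p - r : ℕ) : ℝ) := by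
    rw [Equiv.sum_comp σ t]
    have : ∑ i, t i = (star U * W * U).trace := by
      simp [Matrix.trace, Matrix.diag, ht]
    rw [this, trace_conj hU, hWt]
  have h := fan_scalar (Nat.sub_le p r) (fun i => lam (σ i) ^ q) (fun i => t (σ i)) hmono
    (fun i => conj_entry_nonneg hW _) (fun i => conj_entry_le_one hU hW1 _) hsum
  calc mVal r q hS.1 ≤ ∑ i, t (σ i) * lam (σ i) ^ q := h
    _ = ∑ i, t i * lam i ^ q := Equiv.sum_comp σ (fun i => t i * lam i ^ q)

end perPhi


section perPhi2
variable {p r : ℕ} {S : Matrix (Fin p) (Fin p) ℝ}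

lemma sum_f_eig_congr {A B : Matrix (Fin p) (Fin p) ℝ} (h : A = B)
    (hA : A.IsHermitian) (hB : B.IsHermitian) (f : ℝ → ℝ) :
    ∑ i, f (hA.eigenvalues i) = ∑ i, f (hB.eigenvalues i) := by
  subst h; rfl

lemma isUnit_det_unitary {U : Matrix (Fin p) (Fin p) ℝ}
    (hU : U ∈ Matrix.unitaryGroup (Fin p) ℝ) : IsUnit U.det ∧ IsUnit (star U).det := by
  constructor
  · exact IsUnit.of_mul_eq_one (star U).det (by rw [← det_mul, hU.2, det_one])
  · exact IsUnit.of_mul_eq_one U.det (by rw [← det_mul, hU.1, det_one])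

lemma fan_witness (q : ℝ) (hq : 1 ≤ q) (hS : S.PosSemidef) :
    ∃ W : Matrix (Fin p) (Fin p) ℝ, W.PosSemidef ∧ (1 - W).PosSemidef ∧
      W.trace = ((p - r : ℕ) : ℝ) ∧
      (W * ((hS.1.eigenvectorUnitary : Matrix (Fin p) (Fin p) ℝ) *
        Matrix.diagonal (fun i => hS.1.eigenvalues i ^ q) *
        star (hS.1.eigenvectorUnitary : Matrix (Fin p) (Fin p) ℝ))).trace = mVal r q hS.1 := by
  classical
  set U : Matrix (Fin p) (Fin p) ℝ := (hS.1.eigenvectorUnitary : Matrix (Fin p) (Fin p) ℝ)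
  have hU : U ∈ Matrix.unitaryGroup (Fin p) ℝ := hS.1.eigenvectorUnitary.2
  set lam := hS.1.eigenvalues
  set σ := Tuple.sort lam with hσ
  set k := p - r with hk
  set w : Fin p → ℝ := fun i => if ((σ.symm i : Fin p) : ℕ) < k then 1 else 0 with hw
  refine ⟨U * diagonal w * star U, ?_, ?_, ?_, ?_⟩
  · rw [Matrix.star_eq_conjTranspose]
    exact (posSemidef_diagonal_iff.mpr (fun i => by rw [hw]; positivity)).mul_mul_conjTranspose_same U
  · have h1 : 1 - U * diagonal w * star U = U * diagonal (fun i => 1 - w i) * star U := by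
      have : diagonal (fun i : Fin p => 1 - w i) = 1 - diagonal w := by
        rw [← diagonal_one, diagonal_sub]
      rw [this, Matrix.mul_sub, Matrix.mul_one, Matrix.sub_mul, hU.2]
    rw [h1, Matrix.star_eq_conjTranspose]
    refine (posSemidef_diagonal_iff.mpr (fun i => ?_)).mul_mul_conjTranspose_same U
    rw [hw]
    dsimp only
    split <;> norm_num
  · rw [trace_UDU hU]
    have h2 : ∑ i, w i = ∑ i, w (σ i) := (Equiv.sum_comp σ w).symm
    rw [h2]
    have h3 : ∀ i : Fin p, w (σ i) = if (i : ℕ) < k then 1 else 0 := by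
      intro i; rw [hw]; simp only [Equiv.symm_apply_apply]
    rw [Finset.sum_congr rfl (fun i _ => h3 i), ← Finset.sum_filter]
    simp [card_filter_lt' k (Nat.sub_le p r)]
  · rw [UDU_mul hU, trace_UDU hU]
    have h2 : ∑ i, w i * lam i ^ q = ∑ i, w (σ i) * lam (σ i) ^ q :=
      (Equiv.sum_comp σ (fun i => w i * lam i ^ q)).symm
    rw [h2]
    have h3 : ∀ i : Fin p, w (σ i) * lam (σ i) ^ q
        = if (i : ℕ) < k then lam (σ i) ^ q else 0 := by
      intro i; rw [hw]; simp only [Equiv.symm_apply_apply]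
      split <;> simp
    rw [Finset.sum_congr rfl (fun i _ => h3 i), ← Finset.sum_filter]
    rfl

lemma mirsky_bound (hr : r < p) (q : ℝ) (hq : 1 ≤ q) (hS : S.PosSemidef)
    {Θ : Matrix (Fin p) (Fin p) ℝ} (hrank : Θ.rank ≤ r) (hM : (S - Θ).IsHermitian) :
    mVal r q hS.1 ≤ ∑ i, |hM.eigenvalues i| ^ q := by
  classical
  set lam := hS.1.eigenvalues
  set nu := hM.eigenvalues
  set σ := Tuple.sort lam
  set τ := Tuple.sort nu
  set k := p - r with hk
  set g : Fin p → Fin p := fun j => if h : (j:ℕ) + r < p then ⟨(j:ℕ) + r, h⟩ else j with hg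
  set B : Finset (Fin p) := Finset.univ.filter (fun i : Fin p => (i:ℕ) < k) with hB
  have hgB : ∀ j ∈ B, (g j : ℕ) = (j:ℕ) + r := by
    intro j hj
    rw [hB, Finset.mem_filter] at hj
    have : (j:ℕ) + r < p := by omega
    rw [hg]; simp [this]
  have hstep : ∀ j ∈ B, lam (σ j) ^ q ≤ |nu (τ (g j))| ^ q := by
    intro j hj
    have hw := weyl_ineq hS.1 hrank hM σ τ (Tuple.monotone_sort lam) (Tuple.monotone_sort nu)
      j (g j) (hgB j hj)
    exact Real.rpow_le_rpow (hS.eigenvalues_nonneg _) (le_trans hw (le_abs_self _))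
      (le_trans zero_le_one hq)
  have hinj : ∀ j1 ∈ B, ∀ j2 ∈ B, g j1 = g j2 → j1 = j2 := by
    intro j1 h1 j2 h2 he
    have e1 := hgB j1 h1
    have e2 := hgB j2 h2
    rw [he] at e1
    exact Fin.ext (by omega)
  calc mVal r q hS.1 ≤ ∑ j ∈ B, |nu (τ (g j))| ^ q := Finset.sum_le_sum hstep
    _ = ∑ i ∈ B.image g, |nu (τ i)| ^ q := (Finset.sum_image (f := fun i => |nu (τ i)| ^ q) hinj).symm
    _ ≤ ∑ i, |nu (τ i)| ^ q := Finset.sum_le_sum_of_subset_of_nonneg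
        (Finset.subset_univ _) (fun i _ _ => Real.rpow_nonneg (abs_nonneg _) q)
    _ = ∑ i, |nu i| ^ q := Equiv.sum_comp τ (fun i => |nu i| ^ q)

lemma mirsky_witness (hr : r < p) (q : ℝ) (hq : 1 ≤ q) (hS : S.PosSemidef) :
    ∃ Θ : Matrix (Fin p) (Fin p) ℝ, Θ.PosSemidef ∧ Θ.rank ≤ r ∧
      ∀ hM : (S - Θ).IsHermitian, ∑ i, |hM.eigenvalues i| ^ q = mVal r q hS.1 := by
  classical
  set U : Matrix (Fin p) (Fin p) ℝ := (hS.1.eigenvectorUnitary : Matrix (Fin p) (Fin p) ℝ)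
  have hU : U ∈ Matrix.unitaryGroup (Fin p) ℝ := hS.1.eigenvectorUnitary.2
  set lam := hS.1.eigenvalues
  set σ := Tuple.sort lam
  set k := p - r with hk
  set θd : Fin p → ℝ := fun i => if ((σ.symm i : Fin p) : ℕ) < k then 0 else lam i with hθd
  set dk : Fin p → ℝ := fun i => if ((σ.symm i : Fin p) : ℕ) < k then lam i else 0 with hdk
  have hSmΘ : S - U * diagonal θd * star U = U * diagonal dk * star U := by
    conv_lhs => rw [real_spectral hS.1]
    rw [← Matrix.sub_mul, ← Matrix.mul_sub, diagonal_sub]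
    have hfun : (fun i => lam i - θd i) = dk := by
      funext i
      rw [hθd, hdk]
      dsimp only
      by_cases hc : ((σ.symm i : Fin p) : ℕ) < k
      · simp [hc]
      · simp [hc]
    rw [hfun]
  refine ⟨U * diagonal θd * star U, ?_, ?_, ?_⟩
  · rw [Matrix.star_eq_conjTranspose]
    refine (posSemidef_diagonal_iff.mpr (fun i => ?_)).mul_mul_conjTranspose_same U
    rw [hθd]
    dsimp only
    split
    · exact le_refl _
    · exact hS.eigenvalues_nonneg i
  · have hdetU := isUnit_det_unitary hU
    have h1 : (U * diagonal θd * star U).rank = (diagonal θd).rank := by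
      rw [rank_mul_eq_left_of_isUnit_det (star U) (U * diagonal θd) hdetU.2,
        rank_mul_eq_right_of_isUnit_det U (diagonal θd) hdetU.1]
    rw [h1, Matrix.rank_diagonal]
    have h2 : Finset.univ.filter (fun i : Fin p => θd i ≠ 0)
        ⊆ Finset.univ.filter (fun i : Fin p => ¬ ((σ.symm i : Fin p) : ℕ) < k) := by
      intro i hi
      rw [Finset.mem_filter] at hi ⊢
      refine ⟨Finset.mem_univ _, fun hlt => ?_⟩
      apply hi.2
      rw [hθd]; simp [hlt]
    have h3 : (Finset.univ.filter (fun i : Fin p => ¬ ((σ.symm i : Fin p) : ℕ) < k)).card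
        = p - k := by
      have himg : Finset.univ.filter (fun i : Fin p => ¬ ((σ.symm i : Fin p) : ℕ) < k)
          = (Finset.univ.filter (fun i : Fin p => ¬ (i : ℕ) < k)).image σ := by
        ext i
        simp only [Finset.mem_filter, Finset.mem_univ, true_and, Finset.mem_image]
        constructor
        · intro h; exact ⟨σ.symm i, h, Equiv.apply_symm_apply σ i⟩
        · rintro ⟨l, hl, rfl⟩; rwa [Equiv.symm_apply_apply]
      rw [himg, Finset.card_image_of_injective _ σ.injective]
      have : (Finset.univ.filter (fun i : Fin p => ¬ (i : ℕ) < k))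
          = (Finset.univ.filter (fun i : Fin p => k ≤ (i : ℕ))) := by
        apply Finset.filter_congr; intro i _; simp [not_lt]
      rw [this, card_filter_ge k (Nat.sub_le p r)]
    have h4 : Fintype.card {i // θd i ≠ 0}
        = (Finset.univ.filter (fun i : Fin p => θd i ≠ 0)).card := by
      rw [Fintype.card_subtype]
    rw [h4]
    have := Finset.card_le_card h2
    omega
  · intro hM
    have hherm : (U * diagonal dk * star U).IsHermitian := by
      rw [← hSmΘ]; exact hM
    have e1 : ∑ i, |hM.eigenvalues i| ^ q = ∑ i, |hherm.eigenvalues i| ^ q :=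
      sum_f_eig_congr hSmΘ hM hherm (fun x => |x| ^ q)
    have e2 := sum_f_eig hU dk hherm (fun x => |x| ^ q)
    rw [e1, e2]
    have h3 : ∀ i : Fin p, |dk (σ i)| ^ q = if (i : ℕ) < k then lam (σ i) ^ q else 0 := by
      intro i
      rw [hdk]
      dsimp only
      simp only [Equiv.symm_apply_apply]
      split
      · rw [abs_of_nonneg (hS.eigenvalues_nonneg _)]
      · rw [abs_zero, Real.zero_rpow (by linarith)]
    calc ∑ i, |dk i| ^ q = ∑ i : Fin p, |dk (σ i)| ^ q :=
          (Equiv.sum_comp σ (fun i => |dk i| ^ q)).symm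
      _ = ∑ i : Fin p, if (i : ℕ) < k then lam (σ i) ^ q else 0 :=
          Finset.sum_congr rfl (fun i _ => h3 i)
      _ = mVal r q hS.1 := by rw [← Finset.sum_filter]; rfl

end perPhi2

end FAaux

open Finset in
/-- Equivalence of the rank-constrained FA problem with its trace reformulation:
the minimum of `‖Σ - Θ - Φ‖_q^q` over PSD `Θ` of rank at most `r` and diagonal
PSD `Φ` with `Σ - Φ ⪰ 0` equals the minimum of `Tr(W (Σ - Φ)^q)` over such `Φ`
and symmetric `W` with `0 ⪯ W ⪯ I`, `Tr W = p - r`. -/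
theorem fa_trace_reformulation {p r : ℕ} (hr : r < p) (q : ℝ) (hq : 1 ≤ q)
    (Sig : Matrix (Fin p) (Fin p) ℝ) (hSig : Sig.PosSemidef) :
    sInf {v : ℝ | ∃ (Θ Phi : Matrix (Fin p) (Fin p) ℝ)
        (hΘ : Θ.PosSemidef) (hPhi : Phi.PosSemidef),
        Θ.rank ≤ r ∧ Phi.IsDiag ∧ (Sig - Phi).PosSemidef ∧
        v = ∑ i, |((hSig.1.sub hΘ.1).sub hPhi.1).eigenvalues i| ^ q} =
    sInf {v : ℝ | ∃ (Phi W : Matrix (Fin p) (Fin p) ℝ)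
        (hSPhi : (Sig - Phi).PosSemidef),
        Phi.IsDiag ∧ Phi.PosSemidef ∧ W.PosSemidef ∧ (1 - W).PosSemidef ∧
        W.trace = ((p - r : ℕ) : ℝ) ∧ v = (W * matrixRpow hSPhi.1 q).trace} := by
  classical
  set L := {v : ℝ | ∃ (Θ Phi : Matrix (Fin p) (Fin p) ℝ)
      (hΘ : Θ.PosSemidef) (hPhi : Phi.PosSemidef),
      Θ.rank ≤ r ∧ Phi.IsDiag ∧ (Sig - Phi).PosSemidef ∧
      v = ∑ i, |((hSig.1.sub hΘ.1).sub hPhi.1).eigenvalues i| ^ q} with hL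
  set R : Set ℝ := {v : ℝ | ∃ (Phi W : Matrix (Fin p) (Fin p) ℝ)
      (hSPhi : (Sig - Phi).PosSemidef),
      Phi.IsDiag ∧ Phi.PosSemidef ∧ W.PosSemidef ∧ (1 - W).PosSemidef ∧
      W.trace = ((p - r : ℕ) : ℝ) ∧ v = (W * matrixRpow hSPhi.1 q).trace} with hR
  -- generic facts
  have claimA : ∀ v ∈ R, ∃ u ∈ L, u ≤ v := by
    rintro v ⟨Phi, W, hSPhi, hdiag, hPhiPSD, hWpsd, hW1, hWt, rfl⟩
    have hfan : mVal r q hSPhi.1 ≤ (W * matrixRpow hSPhi.1 q).trace :=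
      fan_bound q hq hSPhi hWpsd hW1 hWt
    obtain ⟨Θ, hΘpsd, hΘrank, hval⟩ := mirsky_witness hr q hq hSPhi
    have heq : Sig - Θ - Phi = (Sig - Phi) - Θ := sub_right_comm Sig Θ Phi
    have hM : ((Sig - Phi) - Θ).IsHermitian := heq ▸ ((hSig.1.sub hΘpsd.1).sub hPhiPSD.1)
    refine ⟨∑ i, |((hSig.1.sub hΘpsd.1).sub hPhiPSD.1).eigenvalues i| ^ q,
      ⟨Θ, Phi, hΘpsd, hPhiPSD, hΘrank, hdiag, hSPhi, rfl⟩, ?_⟩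
    have hveq : (∑ i, |((hSig.1.sub hΘpsd.1).sub hPhiPSD.1).eigenvalues i| ^ q)
        = mVal r q hSPhi.1 := by
      have h1 := sum_f_eig_congr heq ((hSig.1.sub hΘpsd.1).sub hPhiPSD.1) hM (fun x => |x| ^ q)
      exact h1.trans (hval hM)
    rw [hveq]
    exact hfan
  have claimB : ∀ v ∈ L, ∃ u ∈ R, u ≤ v := by
    rintro v ⟨Θ, Phi, hΘ, hPhi, hrank, hdiag, hSPhi, rfl⟩
    have heq : Sig - Θ - Phi = (Sig - Phi) - Θ := sub_right_comm Sig Θ Phi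
    have hM : ((Sig - Phi) - Θ).IsHermitian := heq ▸ ((hSig.1.sub hΘ.1).sub hPhi.1)
    have hmir : mVal r q hSPhi.1 ≤ ∑ i, |hM.eigenvalues i| ^ q :=
      mirsky_bound hr q hq hSPhi hrank hM
    obtain ⟨W, hWpsd, hW1, hWt, hWval⟩ := fan_witness (r := r) q hq hSPhi
    refine ⟨(W * matrixRpow hSPhi.1 q).trace,
      ⟨Phi, W, hSPhi, hdiag, hPhi, hWpsd, hW1, hWt, rfl⟩, ?_⟩
    have h2 : (W * matrixRpow hSPhi.1 q).trace = mVal r q hSPhi.1 := hWval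
    have h3 : (∑ i, |((hSig.1.sub hΘ.1).sub hPhi.1).eigenvalues i| ^ q)
        = ∑ i, |hM.eigenvalues i| ^ q :=
      sum_f_eig_congr heq ((hSig.1.sub hΘ.1).sub hPhi.1) hM (fun x => |x| ^ q)
    rw [h2, h3]
    exact hmir
  have hRne : R.Nonempty := by
    have hS0 : (Sig - 0).PosSemidef := by rw [sub_zero]; exact hSig
    obtain ⟨W, h1, h2, h3, h4⟩ := fan_witness (r := r) q hq hS0
    exact ⟨(W * matrixRpow hS0.1 q).trace,
      ⟨0, W, hS0, Matrix.isDiag_zero, Matrix.PosSemidef.zero, h1, h2, h3, rfl⟩⟩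
  have hLne : L.Nonempty := by
    obtain ⟨v, hv⟩ := hRne
    obtain ⟨u, hu, _⟩ := claimA v hv
    exact ⟨u, hu⟩
  have hLbdd : BddBelow L := by
    refine ⟨0, fun v hv => ?_⟩
    obtain ⟨Θ, Phi, hΘ, hPhi, _, _, _, rfl⟩ := hv
    exact Finset.sum_nonneg fun i _ => Real.rpow_nonneg (abs_nonneg _) q
  have hRbdd : BddBelow R := by
    refine ⟨0, fun v hv => ?_⟩
    obtain ⟨Phi, W, hSPhi, _, _, hWpsd, hW1, hWt, rfl⟩ := hv
    exact le_trans (mVal_nonneg q hSPhi) (fan_bound q hq hSPhi hWpsd hW1 hWt)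
  apply le_antisymm
  · refine le_csInf hRne fun v hv => ?_
    obtain ⟨u, hu, hle⟩ := claimA v hv
    exact le_trans (csInf_le hLbdd hu) hle
  · refine le_csInf hLne fun v hv => ?_
    obtain ⟨u, hu, hle⟩ := claimB v hv
    exact le_trans (csInf_le hRbdd hu) hle
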